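/- Let X be a nonempty compact subset of a metric space (Y,d) and let F be a multivalued mapping from X to Y such that the function x ↦ d(x,F(x)) is lower semicontinuous on X, and such that for each x ∈ X with x ∉ F(x) there exists z ∈ X with d(z,F(z)) < d(x,F(x)). Then F has a fixed point. -/
import Mathlib

open Metric Filter

lemma lsc_exists_min {α : Type*} [TopologicalSpace α] [CompactSpace α] [Nonempty α]
    (f : α → ℝ) (hbd : ∀ x, 0 ≤ f x) (hf : LowerSemicontinuous f) :
    ∃ x₀, ∀ x, f x₀ ≤ f x := by
  set m := ⨅ x, f x with hm
  have hbdd : BddBelow (Set.range f) := ⟨0, by rintro _ ⟨x, rfl⟩; exact hbd x⟩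
  have hmle : ∀ x, m ≤ f x := fun x => ciInf_le hbdd x
  -- sublevel sets
  have key : (⋂ n : ℕ, f ⁻¹' Set.Iic (m + 1 / (n + 1))).Nonempty := by
    apply IsCompact.nonempty_iInter_of_directed_nonempty_isCompact_isClosed
    · intro a b
      refine ⟨max a b, ?_, ?_⟩ <;> apply Set.preimage_mono <;> apply Set.Iic_subset_Iic.2 <;>
        gcongr <;> [exact le_max_left a b; exact le_max_right a b] <;> simp
    · intro n
      have : m < m + 1 / (n + 1) := lt_add_of_pos_right m (by positivity)
      obtain ⟨x, hx⟩ := exists_lt_of_ciInf_lt (by rw [← hm]; exact this)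
      exact ⟨x, le_of_lt hx⟩
    · intro n; exact (hf.isClosed_preimage _).isCompact
    · intro n; exact hf.isClosed_preimage _
  obtain ⟨x₀, hx₀⟩ := key
  refine ⟨x₀, fun x => ?_⟩
  have : f x₀ ≤ m := by
    refine le_of_forall_pos_le_add fun ε hε => ?_
    obtain ⟨n, hn⟩ := exists_nat_one_div_lt hε
    have := Set.mem_iInter.1 hx₀ n
    simp only [Set.mem_preimage, Set.mem_Iic] at this
    linarith [hn]
  exact this.trans (hmle x)

theorem fixed_point_of_compact_lsc
    {Y : Type*} [MetricSpace Y] (X : Set Y) (hX : X.Nonempty) (hXcpt : IsCompact X)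
    (F : X → Set Y) (hFne : ∀ x, (F x).Nonempty)
    (hlsc : LowerSemicontinuous (fun x : X => infDist (x : Y) (F x)))
    (hcond : ∀ x : X, (x : Y) ∉ F x → ∃ z : X,
      infDist (z : Y) (F z) < infDist (x : Y) (F x)) :
    ∃ x : X, (x : Y) ∈ F x := by
  haveI : CompactSpace X := isCompact_iff_compactSpace.1 hXcpt
  haveI : Nonempty X := hX.to_subtype
  obtain ⟨x₀, hx₀⟩ := lsc_exists_min (fun x : X => infDist (x : Y) (F x))
    (fun x => infDist_nonneg) hlsc
  by_contra h
  push_neg at h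
  obtain ⟨z, hz⟩ := hcond x₀ (h x₀)
  exact absurd (hx₀ z) (not_le.2 hz)
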